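/- Let c > 1/2 and δ > 0 be fixed. Let ℓ ≥ 4 and let ℓ_1, ℓ_2, ℓ_3, ℓ_4 be positive integers with ℓ_1+ℓ_2+ℓ_3+ℓ_4 = ℓ. Then there exist constants C > 0 and ρ ∈ (0,1), depending only on ℓ, c and δ, such that for all n ≥ 1: V_n^{−2ℓc} ∫_{ℝ^n}∫_{ℝ^n} g_n(x_1)^{ℓ_1} · g_n(x_2)^{ℓ_2} · g_n(x_1+x_2)^{ℓ_3} · g_n(x_1−x_2)^{ℓ_4} dx_1 dx_2 ≤ C·ρ^n, where g_n(x) = ( |x|^n + R_n(δ)^n )^{−2c}. -/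

import Mathlib

open MeasureTheory

/-- `V_n = π^{n/2} / Γ(n/2 + 1)`, the volume of the unit ball in `ℝⁿ`. -/
noncomputable def unitBallVol (n : ℕ) : ℝ :=
  Real.pi ^ ((n : ℝ) / 2) / Real.Gamma ((n : ℝ) / 2 + 1)

/-- `R_n(δ) = (δ / V_n)^{1/n}`, the radius of a ball of volume `δ` in `ℝⁿ`. -/
noncomputable def cutRadius (n : ℕ) (δ : ℝ) : ℝ :=
  (δ / unitBallVol n) ^ (1 / (n : ℝ))

/-- `g_n(x) = (|x|^n + R_n(δ)^n)^{-2c}`, the spherical symmetrization of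
`|x|^{-2cn}·1_{|x|>R_n(δ)}`. -/
noncomputable def symTruncPower (n : ℕ) (c δ : ℝ) (x : EuclideanSpace ℝ (Fin n)) : ℝ :=
  (‖x‖ ^ n + cutRadius n δ ^ n) ^ (-(2 * c))

namespace SymTruncAux

open Set Real

lemma unitBallVol_pos (n : ℕ) : 0 < unitBallVol n :=
  div_pos (Real.rpow_pos_of_pos Real.pi_pos _)
    (Real.Gamma_pos_of_pos (by positivity))

lemma cutRadius_pow {n : ℕ} (hn : 1 ≤ n) {δ : ℝ} (hδ : 0 < δ) :
    cutRadius n δ ^ n = δ / unitBallVol n := by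
  have h0 : (0:ℝ) < δ / unitBallVol n := div_pos hδ (unitBallVol_pos n)
  have hn0 : (n:ℝ) ≠ 0 := by positivity
  rw [cutRadius, ← Real.rpow_natCast ((δ / unitBallVol n) ^ (1 / (n:ℝ))) n,
    ← Real.rpow_mul h0.le, one_div, inv_mul_cancel₀ hn0, Real.rpow_one]

lemma volume_unitBall {n : ℕ} (hn : 1 ≤ n) :
    (volume (Metric.ball (0 : EuclideanSpace ℝ (Fin n)) 1)).toReal = unitBallVol n := by
  haveI : Nonempty (Fin n) := ⟨⟨0, hn⟩⟩
  rw [EuclideanSpace.volume_ball, Fintype.card_fin]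
  simp only [ENNReal.ofReal_one, one_pow, one_mul]
  rw [ENNReal.toReal_ofReal (by positivity), unitBallVol]
  congr 1
  rw [Real.sqrt_eq_rpow, ← Real.rpow_natCast (Real.pi ^ ((1:ℝ)/2)) n,
    ← Real.rpow_mul Real.pi_pos.le]
  congr 1
  ring

/-- The basic one-dimensional integral `J`. -/
noncomputable def J (c : ℝ) : ℝ := ∫ t in Ioi (0:ℝ), t ^ (-(4⁻¹ : ℝ)) * (1 + t) ^ (-(2*c))

lemma J_def (c : ℝ) : J c = ∫ t in Ioi (0:ℝ), t ^ (-(4⁻¹ : ℝ)) * (1 + t) ^ (-(2*c)) := rfl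

lemma integrableOn_base {c : ℝ} (hc : 1/2 < c) :
    IntegrableOn (fun t : ℝ => t ^ (-(4⁻¹:ℝ)) * (1+t) ^ (-(2*c))) (Ioi (0:ℝ)) := by
  have hmeas : Measurable fun t : ℝ => t ^ (-(4⁻¹:ℝ)) * (1+t) ^ (-(2*c)) := by fun_prop
  rw [← Ioc_union_Ioi_eq_Ioi (zero_le_one (α := ℝ))]
  refine IntegrableOn.union ?_ ?_
  · -- on (0, 1] compare with t ^ (-1/4)
    have hbase : IntegrableOn (fun t : ℝ => t ^ (-(4⁻¹:ℝ))) (Ioc (0:ℝ) 1) := by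
      rw [← intervalIntegrable_iff_integrableOn_Ioc_of_le zero_le_one]
      exact intervalIntegral.intervalIntegrable_rpow' (by norm_num)
    refine hbase.mono' hmeas.aestronglyMeasurable.restrict ?_
    filter_upwards [ae_restrict_mem measurableSet_Ioc] with t ht
    have ht0 : 0 < t := ht.1
    rw [Real.norm_eq_abs, abs_of_nonneg (by positivity)]
    have h1 : (1+t) ^ (-(2*c)) ≤ 1 :=
      Real.rpow_le_one_of_one_le_of_nonpos (by linarith) (by linarith)
    calc t ^ (-(4⁻¹:ℝ)) * (1+t) ^ (-(2*c)) ≤ t ^ (-(4⁻¹:ℝ)) * 1 := by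
          exact mul_le_mul_of_nonneg_left h1 (by positivity)
      _ = t ^ (-(4⁻¹:ℝ)) := mul_one _
  · -- on (1, ∞) compare with t ^ (-(1/4) - 2c)
    have hbase : IntegrableOn (fun t : ℝ => t ^ (-(4⁻¹:ℝ) + -(2*c))) (Ioi (1:ℝ)) :=
      integrableOn_Ioi_rpow_of_lt (by linarith) zero_lt_one
    refine hbase.mono' hmeas.aestronglyMeasurable.restrict ?_
    filter_upwards [ae_restrict_mem measurableSet_Ioi] with t ht
    have ht0 : (0:ℝ) < t := lt_trans zero_lt_one ht
    rw [Real.norm_eq_abs, abs_of_nonneg (by positivity), Real.rpow_add ht0]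
    refine mul_le_mul_of_nonneg_left ?_ (by positivity)
    exact Real.rpow_le_rpow_of_nonpos ht0 (by linarith) (by linarith)

lemma integrableOn_scaled {c : ℝ} (hc : 1/2 < c) {ρ : ℝ} (hρ : 0 < ρ) :
    IntegrableOn (fun s : ℝ => s ^ (-(4⁻¹:ℝ)) * (s+ρ) ^ (-(2*c))) (Ioi (0:ℝ)) := by
  have h := (integrableOn_Ioi_comp_mul_left_iff
      (fun s : ℝ => s ^ (-(4⁻¹:ℝ)) * (s+ρ) ^ (-(2*c))) 0 hρ)
  rw [mul_zero] at h
  refine h.mp ?_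
  have h2 : IntegrableOn
      (fun t : ℝ => (ρ ^ (-(4⁻¹:ℝ)) * ρ ^ (-(2*c))) * (t ^ (-(4⁻¹:ℝ)) * (1+t) ^ (-(2*c))))
      (Ioi (0:ℝ)) := (integrableOn_base hc).const_mul _
  refine h2.congr_fun (fun t ht => ?_) measurableSet_Ioi
  have ht0 : (0:ℝ) < t := ht
  have he1 : (ρ * t) ^ (-(4⁻¹:ℝ)) = ρ ^ (-(4⁻¹:ℝ)) * t ^ (-(4⁻¹:ℝ)) :=
    Real.mul_rpow hρ.le ht0.le
  have he2 : (ρ * t + ρ) ^ (-(2*c)) = ρ ^ (-(2*c)) * (1+t) ^ (-(2*c)) := by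
    rw [show ρ * t + ρ = ρ * (1 + t) by ring, Real.mul_rpow hρ.le (by linarith)]
  simp only [he1, he2]
  ring

lemma integral_scaled {c : ℝ} (hc : 1/2 < c) {ρ : ℝ} (hρ : 0 < ρ) :
    ∫ s in Ioi (0:ℝ), s ^ (-(4⁻¹:ℝ)) * (s+ρ) ^ (-(2*c)) = ρ ^ (3/4 - 2*c) * J c := by
  have h := integral_comp_mul_left_Ioi
    (fun s : ℝ => s ^ (-(4⁻¹:ℝ)) * (s+ρ) ^ (-(2*c))) 0 hρ
  rw [mul_zero] at h
  have heq : ∀ t ∈ Ioi (0:ℝ),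
      (fun s : ℝ => s ^ (-(4⁻¹:ℝ)) * (s+ρ) ^ (-(2*c))) (ρ * t)
        = (ρ ^ (-(4⁻¹:ℝ)) * ρ ^ (-(2*c))) * (t ^ (-(4⁻¹:ℝ)) * (1+t) ^ (-(2*c))) := by
    intro t ht
    have ht0 : (0:ℝ) < t := ht
    have he1 : (ρ * t) ^ (-(4⁻¹:ℝ)) = ρ ^ (-(4⁻¹:ℝ)) * t ^ (-(4⁻¹:ℝ)) :=
      Real.mul_rpow hρ.le ht0.le
    have he2 : (ρ * t + ρ) ^ (-(2*c)) = ρ ^ (-(2*c)) * (1+t) ^ (-(2*c)) := by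
      rw [show ρ * t + ρ = ρ * (1 + t) by ring, Real.mul_rpow hρ.le (by linarith)]
    simp only [he1, he2]
    ring
  rw [setIntegral_congr_fun measurableSet_Ioi heq, integral_const_mul, ← J_def] at h
  beta_reduce at h
  have h3 : (∫ s in Ioi (0:ℝ), s ^ (-(4⁻¹:ℝ)) * (s+ρ) ^ (-(2*c)))
      = ρ * ((ρ ^ (-(4⁻¹:ℝ)) * ρ ^ (-(2*c))) * J c) := by
    rw [h, smul_eq_mul, ← mul_assoc, mul_inv_cancel₀ hρ.ne', one_mul]
  have h2 : ρ * (ρ ^ (-(4⁻¹:ℝ)) * ρ ^ (-(2*c))) = ρ ^ (3/4 - 2*c) := by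
    rw [← Real.rpow_add hρ, mul_comm, ← Real.rpow_add_one hρ.ne']
    congr 1; ring
  rw [h3, ← mul_assoc, h2]

lemma radial_eq {n : ℕ} (hn : 1 ≤ n) {ρ c : ℝ} :
    ∀ x ∈ Ioi (0:ℝ),
      (x ^ ((n:ℝ) - 1)) • ((fun s : ℝ => s ^ (-(4⁻¹:ℝ)) * (s+ρ) ^ (-(2*c))) (x ^ ((n:ℝ))))
        = x ^ (n-1) * (x ^ (-((n:ℝ)/4)) * (x ^ n + ρ) ^ (-(2*c))) := by
  intro x hx
  have hx0 : (0:ℝ) < x := hx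
  have e1 : x ^ ((n:ℝ) - 1) = x ^ (n-1 : ℕ) := by
    rw [← Real.rpow_natCast x (n-1), Nat.cast_sub hn, Nat.cast_one]
  have e2 : (x ^ ((n:ℝ))) ^ (-(4⁻¹:ℝ)) = x ^ (-((n:ℝ)/4)) := by
    rw [← Real.rpow_mul hx0.le]; congr 1; ring
  have e3 : x ^ ((n:ℝ)) = x ^ (n : ℕ) := Real.rpow_natCast x n
  simp only [smul_eq_mul]
  rw [e2, e3, e1]

lemma integrableOn_radial {c : ℝ} (hc : 1/2 < c) {n : ℕ} (hn : 1 ≤ n) {ρ : ℝ} (hρ : 0 < ρ) :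
    IntegrableOn
      (fun r : ℝ => r ^ (n-1) * (r ^ (-((n:ℝ)/4)) * (r ^ n + ρ) ^ (-(2*c)))) (Ioi (0:ℝ)) := by
  have hp : ((n:ℝ)) ≠ 0 := by positivity
  have h := (integrableOn_Ioi_comp_rpow_iff'
      (fun s : ℝ => s ^ (-(4⁻¹:ℝ)) * (s+ρ) ^ (-(2*c))) hp).mpr (integrableOn_scaled hc hρ)
  exact h.congr_fun (radial_eq hn) measurableSet_Ioi

lemma integral_radial {c : ℝ} (hc : 1/2 < c) {n : ℕ} (hn : 1 ≤ n) {ρ : ℝ} (hρ : 0 < ρ) :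
    ∫ r in Ioi (0:ℝ), r ^ (n-1) * (r ^ (-((n:ℝ)/4)) * (r ^ n + ρ) ^ (-(2*c)))
      = (n:ℝ)⁻¹ * (ρ ^ (3/4 - 2*c) * J c) := by
  have hp : (0:ℝ) < (n:ℝ) := by positivity
  have h := integral_comp_rpow_Ioi_of_pos
    (g := fun s : ℝ => s ^ (-(4⁻¹:ℝ)) * (s+ρ) ^ (-(2*c))) hp
  rw [integral_scaled hc hρ] at h
  have heq : ∀ x ∈ Ioi (0:ℝ),
      (((n:ℝ) * x ^ ((n:ℝ)-1)) • ((fun s : ℝ => s ^ (-(4⁻¹:ℝ)) * (s+ρ) ^ (-(2*c))) (x ^ ((n:ℝ)))))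
        = (n:ℝ) * (x ^ (n-1) * (x ^ (-((n:ℝ)/4)) * (x ^ n + ρ) ^ (-(2*c)))) := by
    intro x hx
    rw [mul_smul, smul_eq_mul, radial_eq hn x hx]
  rw [setIntegral_congr_fun measurableSet_Ioi heq, integral_const_mul] at h
  rw [← h, ← mul_assoc, inv_mul_cancel₀ hp.ne', one_mul]

lemma nontrivial_euclidean {n : ℕ} (hn : 1 ≤ n) : Nontrivial (EuclideanSpace ℝ (Fin n)) := by
  refine ⟨EuclideanSpace.single ⟨0, hn⟩ (1:ℝ), 0, ?_⟩
  intro h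
  have := congrArg (fun v : EuclideanSpace ℝ (Fin n) => v ⟨0, hn⟩) h
  simp [EuclideanSpace.single_apply] at this

lemma integrable_comp_norm {n : ℕ} (hn : 1 ≤ n) {f : ℝ → ℝ}
    (hf : IntegrableOn (fun r => r ^ (n - 1) * f r) (Ioi (0:ℝ))) :
    Integrable (fun x : EuclideanSpace ℝ (Fin n) => f ‖x‖) := by
  haveI := nontrivial_euclidean hn
  set E := EuclideanSpace ℝ (Fin n) with hE
  have hdim : Module.finrank ℝ E = n := finrank_euclideanSpace_fin
  -- integrability with respect to `volumeIoiPow (n-1)`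
  have h1 : Integrable (fun r : Ioi (0:ℝ) => f r) (Measure.volumeIoiPow (n - 1)) := by
    rw [Measure.volumeIoiPow, integrable_withDensity_iff_integrable_smul'
      ((measurable_subtype_coe.pow_const _).ennreal_ofReal)
      (Filter.Eventually.of_forall fun r => ENNReal.ofReal_lt_top)]
    have heq : (fun r : Ioi (0:ℝ) => (ENNReal.ofReal (r.1 ^ (n-1))).toReal • f r.1)
        = (fun s : ℝ => s ^ (n-1) * f s) ∘ Subtype.val := by
      funext r
      simp only [Function.comp_apply, smul_eq_mul,
        ENNReal.toReal_ofReal (pow_nonneg r.2.out.le _)]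
    rw [heq, ← (MeasurableEmbedding.subtype_coe
      (measurableSet_Ioi (a := (0:ℝ)))).integrable_map_iff,
      map_comap_subtype_coe (measurableSet_Ioi (a := (0:ℝ)))]
    exact hf
  -- integrability over the product
  have h2 : Integrable (fun p : Metric.sphere (0:E) 1 × Ioi (0:ℝ) => f p.2)
      ((volume : Measure E).toSphere.prod (Measure.volumeIoiPow (n-1))) := by
    have := (integrable_const (1:ℝ) (μ := (volume : Measure E).toSphere)).smul_prod h1
    simpa using this
  -- pull back through the homeomorphism
  have hpres := (volume : Measure E).measurePreserving_homeomorphUnitSphereProd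
  rw [hdim] at hpres
  have h3 : Integrable ((fun p : Metric.sphere (0:E) 1 × Ioi (0:ℝ) => f p.2)
      ∘ (homeomorphUnitSphereProd E)) ((volume : Measure E).comap Subtype.val) :=
    (hpres.integrable_comp_emb (Homeomorph.measurableEmbedding _)).mpr h2
  have h4 : Integrable (fun x : E => f ‖x‖) (volume.restrict ({(0:E)}ᶜ)) := by
    rw [← map_comap_subtype_coe (measurableSet_singleton (0:E)).compl]
    exact (MeasurableEmbedding.subtype_coe
      (measurableSet_singleton (0:E)).compl).integrable_map_iff.mpr (by
      convert h3 using 1; funext x; simp [homeomorphUnitSphereProd])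
  rwa [restrict_compl_singleton] at h4

lemma integral_comp_norm {n : ℕ} (hn : 1 ≤ n) (f : ℝ → ℝ) :
    ∫ x : EuclideanSpace ℝ (Fin n), f ‖x‖ =
      (n : ℝ) * unitBallVol n * ∫ r in Ioi (0:ℝ), r ^ (n-1) * f r := by
  haveI := nontrivial_euclidean hn
  rw [MeasureTheory.integral_fun_norm_addHaar (volume : Measure (EuclideanSpace ℝ (Fin n))) f]
  simp only [finrank_euclideanSpace_fin, nsmul_eq_mul, smul_eq_mul, measureReal_def, volume_unitBall hn,
    ← mul_assoc]

lemma key_pointwise {c δ : ℝ} (hc : 1/2 < c) (hδ : 0 < δ) {n : ℕ} (hn : 1 ≤ n)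
    (m₁ m₂ m₃ m₄ : ℕ) {x₁ x₂ : EuclideanSpace ℝ (Fin n)} (hx₁ : x₁ ≠ 0) (hx₂ : x₂ ≠ 0) :
    symTruncPower n c δ x₁ ^ (m₁+1) * symTruncPower n c δ x₂ ^ (m₂+1) *
      symTruncPower n c δ (x₁+x₂) ^ (m₃+1) * symTruncPower n c δ (x₁-x₂) ^ (m₄+1) ≤
    ((δ / unitBallVol n) ^ (-(2*c))) ^ (m₁+m₂+m₃+m₄) * (δ / unitBallVol n) ^ (-(2*c)) *
      (δ / unitBallVol n) ^ (2⁻¹ - 2*c) * 2 ^ (-((n:ℝ)/4)) *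
      (‖x₁‖ ^ (-((n:ℝ)/4)) * (‖x₁‖ ^ n + δ / unitBallVol n) ^ (-(2*c))) *
      (‖x₂‖ ^ (-((n:ℝ)/4)) * (‖x₂‖ ^ n + δ / unitBallVol n) ^ (-(2*c))) := by
  have hV : 0 < unitBallVol n := unitBallVol_pos n
  set ρ : ℝ := δ / unitBallVol n with hρdef
  have hρ : 0 < ρ := div_pos hδ hV
  have hcut : cutRadius n δ ^ n = ρ := cutRadius_pow hn hδ
  set q : ℝ := ρ ^ (-(2*c)) with hq
  have hq0 : 0 ≤ q := Real.rpow_nonneg hρ.le _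
  simp only [symTruncPower, hcut]
  set a : ℝ := ‖x₁‖
  set b : ℝ := ‖x₂‖
  set u : ℝ := ‖x₁ + x₂‖
  set v : ℝ := ‖x₁ - x₂‖
  have ha : 0 < a := norm_pos_iff.mpr hx₁
  have hb : 0 < b := norm_pos_iff.mpr hx₂
  have hu : 0 ≤ u := norm_nonneg _
  have hv : 0 ≤ v := norm_nonneg _
  -- basic facts about g t = (t^n + ρ)^(-2c)
  have hgnn : ∀ t : ℝ, 0 ≤ t → 0 ≤ (t ^ n + ρ) ^ (-(2*c)) := fun t ht =>
    Real.rpow_nonneg (by positivity) _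
  have hgle : ∀ t : ℝ, 0 ≤ t → (t ^ n + ρ) ^ (-(2*c)) ≤ q := fun t ht =>
    Real.rpow_le_rpow_of_nonpos hρ (le_add_of_nonneg_left (by positivity))
      (by nlinarith)
  have hpow : ∀ t : ℝ, 0 ≤ t → ∀ m : ℕ,
      ((t ^ n + ρ) ^ (-(2*c))) ^ (m+1) ≤ q ^ m * (t ^ n + ρ) ^ (-(2*c)) := by
    intro t ht m
    rw [pow_succ]
    exact mul_le_mul_of_nonneg_right (pow_le_pow_left₀ (hgnn t ht) (hgle t ht) m) (hgnn t ht)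
  set M : ℝ := max u v with hM
  have hM0 : 0 ≤ M := le_trans hu (le_max_left u v)
  -- parallelogram
  have hM2 : 2*(a*b) ≤ M*M := by
    have hpar := parallelogram_law_with_norm ℝ x₁ x₂
    have h1 : u*u ≤ M*M := mul_self_le_mul_self hu (le_max_left u v)
    have h2 : v*v ≤ M*M := mul_self_le_mul_self hv (le_max_right u v)
    nlinarith [sq_nonneg (a - b)]
  have hMn : (2*(a*b)) ^ ((n:ℝ)/2) ≤ M ^ n := by
    have : (2*(a*b)) ^ ((n:ℝ)/2) ≤ (M*M) ^ ((n:ℝ)/2) :=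
      Real.rpow_le_rpow (by positivity) hM2 (by positivity)
    refine le_trans this (le_of_eq ?_)
    rw [← Real.rpow_natCast M n, show M*M = M ^ (2:ℕ) from (sq M).symm,
      ← Real.rpow_natCast M 2, ← Real.rpow_mul hM0]
    congr 1
    push_cast
    ring
  -- the product of the two shifted factors
  have hprod : (u ^ n + ρ) ^ (-(2*c)) * (v ^ n + ρ) ^ (-(2*c))
      ≤ q * (M ^ n + ρ) ^ (-(2*c)) := by
    rcases le_total u v with huv | huv
    · have hMv : M = v := max_eq_right huv
      rw [hMv]
      exact mul_le_mul_of_nonneg_right (hgle u hu) (hgnn v hv)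
    · have hMu : M = u := max_eq_left huv
      rw [hMu, mul_comm ((u ^ n + ρ) ^ (-(2*c)))]
      exact mul_le_mul_of_nonneg_right (hgle v hv) (hgnn u hu)
  -- bound on (M^n + ρ)^(-2c)
  have hfinal : (M ^ n + ρ) ^ (-(2*c))
      ≤ ρ ^ (2⁻¹ - 2*c) * (2 ^ (-((n:ℝ)/4)) * (a ^ (-((n:ℝ)/4)) * b ^ (-((n:ℝ)/4)))) := by
    have hXpos : (0:ℝ) < (2*(a*b)) ^ ((n:ℝ)/2) := Real.rpow_pos_of_pos (by positivity) _
    have hMpos : (0:ℝ) < M ^ n + ρ := by positivity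
    have hsplit : (M ^ n + ρ) ^ (-(2*c))
        = (M ^ n + ρ) ^ (2⁻¹ - 2*c) * (M ^ n + ρ) ^ (-(2⁻¹:ℝ)) := by
      rw [← Real.rpow_add hMpos]
      congr 1; ring
    rw [hsplit]
    have hpart1 : (M ^ n + ρ) ^ (2⁻¹ - 2*c) ≤ ρ ^ (2⁻¹ - 2*c) :=
      Real.rpow_le_rpow_of_nonpos hρ (le_add_of_nonneg_left (by positivity)) (by nlinarith)
    have hpart2 : (M ^ n + ρ) ^ (-(2⁻¹:ℝ))
        ≤ 2 ^ (-((n:ℝ)/4)) * (a ^ (-((n:ℝ)/4)) * b ^ (-((n:ℝ)/4))) := by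
      have h1 : (M ^ n + ρ) ^ (-(2⁻¹:ℝ)) ≤ ((2*(a*b)) ^ ((n:ℝ)/2)) ^ (-(2⁻¹:ℝ)) :=
        Real.rpow_le_rpow_of_nonpos hXpos
          (le_trans hMn (le_add_of_nonneg_right hρ.le)) (by norm_num)
      refine le_trans h1 (le_of_eq ?_)
      rw [← Real.rpow_mul (by positivity : (0:ℝ) ≤ 2*(a*b)),
        show ((n:ℝ)/2) * (-(2⁻¹:ℝ)) = -((n:ℝ)/4) by ring,
        show (2*(a*b) : ℝ) = 2*a*b by ring,
        Real.mul_rpow (by positivity : (0:ℝ) ≤ 2*a) hb.le,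
        Real.mul_rpow (by norm_num : (0:ℝ) ≤ 2) ha.le]
      ring
    exact mul_le_mul hpart1 hpart2 (Real.rpow_nonneg hMpos.le _) (Real.rpow_nonneg hρ.le _)
  -- assemble
  have hA := hpow a ha.le m₁
  have hB := hpow b hb.le m₂
  have hC := hpow u hu m₃
  have hD := hpow v hv m₄
  have hAnn : (0:ℝ) ≤ (a ^ n + ρ) ^ (-(2*c)) := hgnn a ha.le
  have hBnn : (0:ℝ) ≤ (b ^ n + ρ) ^ (-(2*c)) := hgnn b hb.le
  have hCnn : (0:ℝ) ≤ (u ^ n + ρ) ^ (-(2*c)) := hgnn u hu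
  have hDnn : (0:ℝ) ≤ (v ^ n + ρ) ^ (-(2*c)) := hgnn v hv
  calc ((a ^ n + ρ) ^ (-(2*c))) ^ (m₁+1) * ((b ^ n + ρ) ^ (-(2*c))) ^ (m₂+1) *
        ((u ^ n + ρ) ^ (-(2*c))) ^ (m₃+1) * ((v ^ n + ρ) ^ (-(2*c))) ^ (m₄+1)
      = (((a ^ n + ρ) ^ (-(2*c))) ^ (m₁+1) * ((b ^ n + ρ) ^ (-(2*c))) ^ (m₂+1)) *
        (((u ^ n + ρ) ^ (-(2*c))) ^ (m₃+1) * ((v ^ n + ρ) ^ (-(2*c))) ^ (m₄+1)) := by ring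
    _ ≤ ((q ^ m₁ * (a ^ n + ρ) ^ (-(2*c))) * (q ^ m₂ * (b ^ n + ρ) ^ (-(2*c)))) *
        ((q ^ m₃ * (u ^ n + ρ) ^ (-(2*c))) * (q ^ m₄ * (v ^ n + ρ) ^ (-(2*c)))) := by
        refine mul_le_mul (mul_le_mul hA hB (by positivity) (by positivity))
          (mul_le_mul hC hD (by positivity) (by positivity)) (by positivity) (by positivity)
    _ = (q ^ m₁ * q ^ m₂ * q ^ m₃ * q ^ m₄ * ((a ^ n + ρ) ^ (-(2*c)) * (b ^ n + ρ) ^ (-(2*c)))) *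
        ((u ^ n + ρ) ^ (-(2*c)) * (v ^ n + ρ) ^ (-(2*c))) := by ring
    _ ≤ (q ^ m₁ * q ^ m₂ * q ^ m₃ * q ^ m₄ * ((a ^ n + ρ) ^ (-(2*c)) * (b ^ n + ρ) ^ (-(2*c)))) *
        (q * (M ^ n + ρ) ^ (-(2*c))) := by
        exact mul_le_mul_of_nonneg_left hprod (by positivity)
    _ ≤ (q ^ m₁ * q ^ m₂ * q ^ m₃ * q ^ m₄ * ((a ^ n + ρ) ^ (-(2*c)) * (b ^ n + ρ) ^ (-(2*c)))) *
        (q * (ρ ^ (2⁻¹ - 2*c) * (2 ^ (-((n:ℝ)/4)) * (a ^ (-((n:ℝ)/4)) * b ^ (-((n:ℝ)/4)))))) := by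
        refine mul_le_mul_of_nonneg_left (mul_le_mul_of_nonneg_left hfinal hq0) (by positivity)
    _ = q ^ (m₁+m₂+m₃+m₄) * q * ρ ^ (2⁻¹ - 2*c) * 2 ^ (-((n:ℝ)/4)) *
        (a ^ (-((n:ℝ)/4)) * (a ^ n + ρ) ^ (-(2*c))) *
        (b ^ (-((n:ℝ)/4)) * (b ^ n + ρ) ^ (-(2*c))) := by
        rw [pow_add, pow_add, pow_add]; ring

end SymTruncAux

open SymTruncAux Set in
/-- for positive integers `ℓ_1 + ℓ_2 + ℓ_3 + ℓ_4 = ℓ ≥ 4`, the normalized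
double integral of `g_n(x₁)^{ℓ₁} g_n(x₂)^{ℓ₂} g_n(x₁+x₂)^{ℓ₃} g_n(x₁-x₂)^{ℓ₄}` decays
exponentially in `n`. -/
theorem symmetrized_four_fold_integral_bound
    (c δ : ℝ) (hc : 1 / 2 < c) (hδ : 0 < δ)
    (ℓ ℓ₁ ℓ₂ ℓ₃ ℓ₄ : ℕ) (hℓ : 4 ≤ ℓ)
    (h₁ : 0 < ℓ₁) (h₂ : 0 < ℓ₂) (h₃ : 0 < ℓ₃) (h₄ : 0 < ℓ₄)
    (hsum : ℓ₁ + ℓ₂ + ℓ₃ + ℓ₄ = ℓ) :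
    ∃ C ρ : ℝ, 0 < C ∧ ρ ∈ Set.Ioo (0 : ℝ) 1 ∧
      ∀ n : ℕ, 1 ≤ n →
        unitBallVol n ^ (-(2 * (ℓ : ℝ) * c)) *
          ∫ x₁ : EuclideanSpace ℝ (Fin n), ∫ x₂ : EuclideanSpace ℝ (Fin n),
            symTruncPower n c δ x₁ ^ ℓ₁ * symTruncPower n c δ x₂ ^ ℓ₂ *
              symTruncPower n c δ (x₁ + x₂) ^ ℓ₃ * symTruncPower n c δ (x₁ - x₂) ^ ℓ₄
        ≤ C * ρ ^ n := by
  obtain ⟨m₁, rfl⟩ : ∃ m, ℓ₁ = m + 1 := ⟨ℓ₁ - 1, (Nat.succ_pred_eq_of_pos h₁).symm⟩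
  obtain ⟨m₂, rfl⟩ : ∃ m, ℓ₂ = m + 1 := ⟨ℓ₂ - 1, (Nat.succ_pred_eq_of_pos h₂).symm⟩
  obtain ⟨m₃, rfl⟩ : ∃ m, ℓ₃ = m + 1 := ⟨ℓ₃ - 1, (Nat.succ_pred_eq_of_pos h₃).symm⟩
  obtain ⟨m₄, rfl⟩ : ∃ m, ℓ₄ = m + 1 := ⟨ℓ₄ - 1, (Nat.succ_pred_eq_of_pos h₄).symm⟩
  have hJ : (0:ℝ) ≤ J c ^ 2 := sq_nonneg _
  refine ⟨(J c ^ 2 + 1) * δ ^ (2 - 2*(ℓ:ℝ)*c), 2 ^ (-(4⁻¹:ℝ)), by positivity,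
    ⟨Real.rpow_pos_of_pos two_pos _,
      Real.rpow_lt_one_of_one_lt_of_neg one_lt_two (by norm_num)⟩, ?_⟩
  intro n hn
  have hV : 0 < unitBallVol n := unitBallVol_pos n
  have hρ : 0 < δ / unitBallVol n := div_pos hδ hV
  haveI := nontrivial_euclidean hn
  set f : ℝ → ℝ :=
    fun r => r ^ (-((n:ℝ)/4)) * (r ^ n + δ / unitBallVol n) ^ (-(2*c)) with hf
  have hΦint : Integrable (fun x : EuclideanSpace ℝ (Fin n) => f ‖x‖) :=
    integrable_comp_norm hn (integrableOn_radial hc hn hρ)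
  have hΦval : (∫ x : EuclideanSpace ℝ (Fin n), f ‖x‖)
      = unitBallVol n * ((δ / unitBallVol n) ^ (3/4 - 2*c) * J c) := by
    rw [integral_comp_norm hn f,
      show (fun r : ℝ => r ^ (n-1) * f r) = fun r : ℝ =>
          r ^ (n-1) * (r ^ (-((n:ℝ)/4)) * (r ^ n + δ / unitBallVol n) ^ (-(2*c))) by
        funext r; rw [hf],
      integral_radial hc hn hρ,
      show (n:ℝ) * unitBallVol n *
          ((n:ℝ)⁻¹ * ((δ / unitBallVol n) ^ (3/4 - 2*c) * J c))
        = ((n:ℝ) * (n:ℝ)⁻¹) *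
          (unitBallVol n * ((δ / unitBallVol n) ^ (3/4 - 2*c) * J c)) by ring,
      mul_inv_cancel₀ (by positivity : ((n:ℝ)) ≠ 0), one_mul]
  have hf0 : ∀ x : EuclideanSpace ℝ (Fin n), 0 ≤ f ‖x‖ := by
    intro x; simp only [hf]; positivity
  set IΦ : ℝ := ∫ x : EuclideanSpace ℝ (Fin n), f ‖x‖ with hIΦ
  have hIΦ0 : 0 ≤ IΦ := integral_nonneg hf0
  set K : ℝ := ((δ / unitBallVol n) ^ (-(2*c))) ^ (m₁+m₂+m₃+m₄) *
      (δ / unitBallVol n) ^ (-(2*c)) * (δ / unitBallVol n) ^ (2⁻¹ - 2*c) *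
      2 ^ (-((n:ℝ)/4)) with hK
  have hK0 : 0 ≤ K := by rw [hK]; positivity
  have hFnn : ∀ x₁ x₂ : EuclideanSpace ℝ (Fin n),
      0 ≤ symTruncPower n c δ x₁ ^ (m₁+1) * symTruncPower n c δ x₂ ^ (m₂+1) *
        symTruncPower n c δ (x₁ + x₂) ^ (m₃+1) * symTruncPower n c δ (x₁ - x₂) ^ (m₄+1) := by
    intro x₁ x₂
    have h0 : ∀ y : EuclideanSpace ℝ (Fin n), 0 ≤ symTruncPower n c δ y := by
      intro y
      have : (0:ℝ) ≤ ‖y‖ ^ n + cutRadius n δ ^ n := by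
        have := cutRadius_pow hn hδ (n := n)
        rw [this]; positivity
      exact Real.rpow_nonneg this _
    have := h0 x₁; have := h0 x₂; have := h0 (x₁ + x₂); have := h0 (x₁ - x₂)
    positivity
  have hae : ∀ᵐ x : EuclideanSpace ℝ (Fin n) ∂volume, x ≠ 0 := by
    refine ae_iff.mpr ?_
    rw [show {x : EuclideanSpace ℝ (Fin n) | ¬ x ≠ 0} = {(0 : EuclideanSpace ℝ (Fin n))} by
      ext x; simp]
    exact measure_singleton 0
  have hinner : ∀ x₁ : EuclideanSpace ℝ (Fin n), x₁ ≠ 0 →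
      (∫ x₂ : EuclideanSpace ℝ (Fin n),
        symTruncPower n c δ x₁ ^ (m₁+1) * symTruncPower n c δ x₂ ^ (m₂+1) *
          symTruncPower n c δ (x₁ + x₂) ^ (m₃+1) * symTruncPower n c δ (x₁ - x₂) ^ (m₄+1))
      ≤ (K * f ‖x₁‖) * IΦ := by
    intro x₁ hx₁
    have hle : ∀ᵐ x₂ : EuclideanSpace ℝ (Fin n) ∂volume,
        symTruncPower n c δ x₁ ^ (m₁+1) * symTruncPower n c δ x₂ ^ (m₂+1) *
          symTruncPower n c δ (x₁ + x₂) ^ (m₃+1) * symTruncPower n c δ (x₁ - x₂) ^ (m₄+1)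
        ≤ (K * f ‖x₁‖) * f ‖x₂‖ := by
      filter_upwards [hae] with x₂ hx₂
      refine le_trans (key_pointwise hc hδ hn m₁ m₂ m₃ m₄ hx₁ hx₂) (le_of_eq ?_)
      simp only [hK, hf]
      try ring
    have hmono := integral_mono_of_nonneg
      (Filter.Eventually.of_forall (fun x₂ => hFnn x₁ x₂))
      (hΦint.const_mul (K * f ‖x₁‖)) hle
    rwa [integral_const_mul] at hmono
  have houter : (∫ x₁ : EuclideanSpace ℝ (Fin n), ∫ x₂ : EuclideanSpace ℝ (Fin n),
      symTruncPower n c δ x₁ ^ (m₁+1) * symTruncPower n c δ x₂ ^ (m₂+1) *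
        symTruncPower n c δ (x₁ + x₂) ^ (m₃+1) * symTruncPower n c δ (x₁ - x₂) ^ (m₄+1))
      ≤ (K * IΦ) * IΦ := by
    have hle : ∀ᵐ x₁ : EuclideanSpace ℝ (Fin n) ∂volume,
        (∫ x₂ : EuclideanSpace ℝ (Fin n),
          symTruncPower n c δ x₁ ^ (m₁+1) * symTruncPower n c δ x₂ ^ (m₂+1) *
            symTruncPower n c δ (x₁ + x₂) ^ (m₃+1) * symTruncPower n c δ (x₁ - x₂) ^ (m₄+1))
        ≤ (K * IΦ) * f ‖x₁‖ := by
      filter_upwards [hae] with x₁ hx₁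
      refine le_trans (hinner x₁ hx₁) (le_of_eq ?_)
      ring
    have hmono := integral_mono_of_nonneg
      (Filter.Eventually.of_forall
        (fun x₁ => integral_nonneg (fun x₂ => hFnn x₁ x₂)))
      (hΦint.const_mul (K * IΦ)) hle
    rwa [integral_const_mul] at hmono
  refine le_trans (mul_le_mul_of_nonneg_left houter
    (Real.rpow_nonneg hV.le _)) ?_
  -- final computation
  have hm : ((m₁+m₂+m₃+m₄ : ℕ):ℝ) = (ℓ:ℝ) - 4 := by
    have h4 : m₁+m₂+m₃+m₄+4 = ℓ := by omega
    push_cast [← h4]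
    ring
  have hqpow : ((δ / unitBallVol n) ^ (-(2*c))) ^ (m₁+m₂+m₃+m₄)
      = (δ / unitBallVol n) ^ ((-(2*c)) * ((ℓ:ℝ) - 4)) := by
    rw [← Real.rpow_natCast ((δ / unitBallVol n) ^ (-(2*c))) (m₁+m₂+m₃+m₄),
      ← Real.rpow_mul hρ.le, hm]
  have hρcol : (δ / unitBallVol n) ^ ((-(2*c)) * ((ℓ:ℝ) - 4)) *
        (δ / unitBallVol n) ^ (-(2*c)) * (δ / unitBallVol n) ^ (2⁻¹ - 2*c) *
        ((δ / unitBallVol n) ^ (3/4 - 2*c) * (δ / unitBallVol n) ^ (3/4 - 2*c))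
      = (δ / unitBallVol n) ^ (2 - 2*(ℓ:ℝ)*c) := by
    rw [← Real.rpow_add hρ, ← Real.rpow_add hρ, ← Real.rpow_add hρ, ← Real.rpow_add hρ]
    congr 1; ring
  have hVcol : unitBallVol n ^ (-(2 * (ℓ:ℝ) * c)) * unitBallVol n * unitBallVol n
      = unitBallVol n ^ (2 - 2*(ℓ:ℝ)*c) := by
    rw [← Real.rpow_add_one hV.ne', ← Real.rpow_add_one hV.ne']
    congr 1; ring
  have hVE : unitBallVol n ^ (2 - 2*(ℓ:ℝ)*c) ≠ 0 := (Real.rpow_pos_of_pos hV _).ne'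
  have hcollapse : unitBallVol n ^ (-(2 * (ℓ:ℝ) * c)) * ((K * IΦ) * IΦ)
      = δ ^ (2 - 2*(ℓ:ℝ)*c) * (J c)^2 * 2 ^ (-((n:ℝ)/4)) := by
    rw [hΦval, hK, hqpow]
    calc unitBallVol n ^ (-(2 * (ℓ:ℝ) * c)) *
          (((δ / unitBallVol n) ^ ((-(2*c)) * ((ℓ:ℝ) - 4)) *
            (δ / unitBallVol n) ^ (-(2*c)) * (δ / unitBallVol n) ^ (2⁻¹ - 2*c) *
            2 ^ (-((n:ℝ)/4)) *
            (unitBallVol n * ((δ / unitBallVol n) ^ (3/4 - 2*c) * J c))) *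
            (unitBallVol n * ((δ / unitBallVol n) ^ (3/4 - 2*c) * J c)))
        = (unitBallVol n ^ (-(2 * (ℓ:ℝ) * c)) * unitBallVol n * unitBallVol n) *
          ((δ / unitBallVol n) ^ ((-(2*c)) * ((ℓ:ℝ) - 4)) *
            (δ / unitBallVol n) ^ (-(2*c)) * (δ / unitBallVol n) ^ (2⁻¹ - 2*c) *
            ((δ / unitBallVol n) ^ (3/4 - 2*c) * (δ / unitBallVol n) ^ (3/4 - 2*c))) *
          (2 ^ (-((n:ℝ)/4)) * (J c)^2) := by ring
      _ = unitBallVol n ^ (2 - 2*(ℓ:ℝ)*c) * (δ / unitBallVol n) ^ (2 - 2*(ℓ:ℝ)*c) *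
          (2 ^ (-((n:ℝ)/4)) * (J c)^2) := by rw [hVcol, hρcol]
      _ = δ ^ (2 - 2*(ℓ:ℝ)*c) * (J c)^2 * 2 ^ (-((n:ℝ)/4)) := by
          rw [Real.div_rpow hδ.le hV.le]
          field_simp
  rw [hcollapse]
  have hpow2 : (2:ℝ) ^ (-((n:ℝ)/4)) = ((2:ℝ) ^ (-(4⁻¹:ℝ)))^(n:ℕ) := by
    rw [← Real.rpow_natCast ((2:ℝ) ^ (-(4⁻¹:ℝ))) n, ← Real.rpow_mul (by norm_num : (0:ℝ) ≤ 2)]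
    congr 1; ring
  rw [hpow2]
  calc δ ^ (2 - 2*(ℓ:ℝ)*c) * (J c)^2 * ((2:ℝ) ^ (-(4⁻¹:ℝ)))^(n:ℕ)
      = (J c)^2 * (δ ^ (2 - 2*(ℓ:ℝ)*c) * ((2:ℝ) ^ (-(4⁻¹:ℝ)))^(n:ℕ)) := by ring
    _ ≤ ((J c)^2 + 1) * (δ ^ (2 - 2*(ℓ:ℝ)*c) * ((2:ℝ) ^ (-(4⁻¹:ℝ)))^(n:ℕ)) := by
        refine mul_le_mul_of_nonneg_right (by linarith) (by positivity)
    _ = (J c ^ 2 + 1) * δ ^ (2 - 2*(ℓ:ℝ)*c) * ((2:ℝ) ^ (-(4⁻¹:ℝ)))^(n:ℕ) := by ring
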